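/- The 5×5 matrix 𝒜(W) of the quasi-linear form of the extended 1D blood flow system has eigenvalues λ₁ = u - c, λ₂ = λ₃ = λ₄ = 0, λ₅ = u + c, where c = sqrt((K/ρ)·a·φ'(a)), i.e., the characteristic polynomial of 𝒜(W) equals λ³·(λ² - 2uλ + u² - c²). -/

import Mathlib

open Polynomial

theorem aux_charpoly (p q r s u : ℝ) :
    (!![0, 1, 0, 0, 0;
       p, 2*u, q, r, s;
       0,0,0,0,0; 0,0,0,0,0; 0,0,0,0,0] : Matrix (Fin 5) (Fin 5) ℝ).charpoly
    = X ^ 3 * (X ^ 2 - C (2 * u) * X + C (-p)) := by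
  rw [Matrix.charpoly]
  have h : (!![0, 1, 0, 0, 0;
       p, 2*u, q, r, s;
       0,0,0,0,0; 0,0,0,0,0; 0,0,0,0,0] : Matrix (Fin 5) (Fin 5) ℝ).charmatrix
      = !![X, -1, 0, 0, 0;
           -C p, X - C (2*u), -C q, -C r, -C s;
           0, 0, X, 0, 0;
           0, 0, 0, X, 0;
           0, 0, 0, 0, X] := by
    ext i j
    fin_cases i <;> fin_cases j <;>
      simp [Matrix.charmatrix_apply, Matrix.one_apply, Matrix.vecHead, Matrix.vecTail]
  rw [h]
  simp [Matrix.det_succ_row_zero, Fin.sum_univ_succ, Fin.succAbove]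
  ring

/-- The characteristic polynomial of the 5×5 quasi-linear matrix 𝒜(W) of the
extended 1D blood flow system equals λ³·(λ² - 2uλ + u² - c²), so the eigenvalues
are u - c, 0 (triple), u + c. -/
theorem charpoly_blood_flow_matrix (m n ρ K A A₀ u : ℝ)
    (hm : 0 < m) (hn1 : -2 < n) (hn2 : n ≤ 0)
    (hρ : 0 < ρ) (hK : 0 < K) (hA : 0 < A) (hA₀ : 0 < A₀) :
    let a := A / A₀
    let dφ := m * a ^ (m - 1) - n * a ^ (n - 1)
    let φ := a ^ m - a ^ n
    let c := Real.sqrt ((K / ρ) * a * dφ)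
    let 𝒜 : Matrix (Fin 5) (Fin 5) ℝ :=
      !![0, 1, 0, 0, 0;
         -u ^ 2 + (K / ρ) * a * dφ, 2 * u, (A / ρ) * φ, -(a ^ 2) * (K / ρ) * dφ, A / ρ;
         0, 0, 0, 0, 0;
         0, 0, 0, 0, 0;
         0, 0, 0, 0, 0]
    𝒜.charpoly = X ^ 3 * (X ^ 2 - C (2 * u) * X + C (u ^ 2 - c ^ 2)) := by
  intro a dφ φ c 𝒜
  have ha : 0 < a := div_pos hA hA₀
  have hdφ : 0 < dφ := by
    have h1 : 0 < m * a ^ (m - 1) := mul_pos hm (Real.rpow_pos_of_pos ha _)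
    have h2 : n * a ^ (n - 1) ≤ 0 :=
      mul_nonpos_of_nonpos_of_nonneg hn2 (Real.rpow_pos_of_pos ha _).le
    have : dφ = m * a ^ (m - 1) - n * a ^ (n - 1) := rfl
    rw [this]; linarith
  have hpos : 0 ≤ (K / ρ) * a * dφ :=
    (mul_pos (mul_pos (div_pos hK hρ) ha) hdφ).le
  have hc : c ^ 2 = (K / ρ) * a * dφ := Real.sq_sqrt hpos
  have key : u ^ 2 - c ^ 2 = -(-u ^ 2 + (K / ρ) * a * dφ) := by rw [hc]; ring
  rw [key]
  exact aux_charpoly _ _ _ _ u
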